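/- The conditional relative entropy is strictly convex in its first argument: for p_a, p_b, q ∈ 𝒫̃ with p_a ≠ p_b and λ ∈ (0,1), setting p_λ = λp_a + (1−λ)p_b ∈ 𝒫̃, one has D_c(p_λ‖q) < λ·D_c(p_a‖q) + (1−λ)·D_c(p_b‖q). -/

import Mathlib

open Finset

/-- The four-letter alphabet 𝒳. -/
abbrev X : Type := Fin 4
/-- Triples over 𝒳 (third-order states). -/
abbrev X3 : Type := X × X × X
/-- Quadruples over 𝒳 (tetranucleotides). -/
abbrev X4 : Type := X × X × X × X

/-- Append a letter `b` to a triple `a`, giving the 4-tuple `ab`. -/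
def appX (a : X3) (b : X) : X4 := (a.1, a.2.1, a.2.2, b)

/-- Prepend a letter `b` to a triple `a`, giving the 4-tuple `ba`. -/
def prepX (b : X) (a : X3) : X4 := (b, a.1, a.2.1, a.2.2)

/-- Third-order marginal `p(a) = ∑_b p(ab)`. -/
noncomputable def marg3 (p : X4 → ℝ) (a : X3) : ℝ := ∑ b : X, p (appX a b)

/-- Conditional probability `p(b|a) = p(ab) / p(a)`. -/
noncomputable def condProb (p : X4 → ℝ) (a : X3) (b : X) : ℝ := p (appX a b) / marg3 p a

/-- Membership in 𝒫̃: strictly positive probability distribution on 𝒳⁴ satisfying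
the consistency condition `∑_b p(ab) = ∑_b p(ba)` for all `a ∈ 𝒳³`. -/
structure MemP (p : X4 → ℝ) : Prop where
  pos : ∀ c : X4, 0 < p c
  sum_one : ∑ c : X4, p c = 1
  consistent : ∀ a : X3, (∑ b : X, p (appX a b)) = ∑ b : X, p (prepX b a)

/-- A probability distribution on 𝒳⁴. -/
def IsDist (p : X4 → ℝ) : Prop := (∀ c : X4, 0 ≤ p c) ∧ ∑ c : X4, p c = 1

/-- Conditional relative entropy `D_c(p‖q) = ∑_{a,b} p(ab) log₂ (p(b|a)/q(b|a))`. -/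
noncomputable def Dc (p q : X4 → ℝ) : ℝ :=
  ∑ a : X3, ∑ b : X, p (appX a b) * Real.logb 2 (condProb p a b / condProb q a b)

/-- Conditional entropy `H_c(p) = -∑_{a,b} p(ab) log₂ p(b|a)`. -/
noncomputable def Hc (p : X4 → ℝ) : ℝ :=
  - ∑ a : X3, ∑ b : X, p (appX a b) * Real.logb 2 (condProb p a b)

/-- Chernoff information
`C(p₁,p₂) = inf { D_c(p‖p₁) : p ∈ 𝒫̃, D_c(p‖p₁) = D_c(p‖p₂) }`. -/
noncomputable def Chernoff (p₁ p₂ : X4 → ℝ) : ℝ :=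
  sInf {x : ℝ | ∃ p : X4 → ℝ, MemP p ∧ Dc p p₁ = Dc p p₂ ∧ x = Dc p p₁}

/-- ℓ₁ distance between distributions on 𝒳⁴. -/
noncomputable def l1dist (p q : X4 → ℝ) : ℝ := ∑ c : X4, |p c - q c|

/-- Cyclic indexing of a length-`L` sequence by an arbitrary natural. -/
def cyc {L : ℕ} (x : Fin L → X) (i : ℕ) : X :=
  if h : 0 < L then x ⟨i % L, Nat.mod_lt i h⟩ else 0

/-- The cyclic empirical fourth-order distribution (type) `p̂_x` of a sequence `x ∈ 𝒳^L`:
`p̂_x(c) = (1/L)·#{i : (x_i,x_{i+1},x_{i+2},x_{i+3}) = c}`, indices mod `L`. -/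
noncomputable def empDist {L : ℕ} (x : Fin L → X) (c : X4) : ℝ :=
  (((Finset.range L).filter
      (fun i => (cyc x i, cyc x (i+1), cyc x (i+2), cyc x (i+3)) = c)).card : ℝ) / L

/-- The stationary third-order Markov law on 𝒳^L:
`P_q^{(L)}(x) = q(x₁x₂x₃)·∏_{i=4}^{L} q(x_i | x_{i-3}x_{i-2}x_{i-1})` (0-indexed here). -/
noncomputable def markovLaw (q : X4 → ℝ) {L : ℕ} (x : Fin L → X) : ℝ :=
  marg3 q (cyc x 0, cyc x 1, cyc x 2) *
    ∏ i ∈ Finset.Ico 3 L,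
      condProb q (cyc x (i-3), cyc x (i-2), cyc x (i-1)) (cyc x i)

/-- The cyclic Markov likelihood
`q̃^{(L)}(x) = q(x₁x₂x₃)·∏_{i=1}^{L} q(x_{i+3} | x_i x_{i+1} x_{i+2})`, indices mod `L`. -/
noncomputable def cyclicLaw (q : X4 → ℝ) {L : ℕ} (x : Fin L → X) : ℝ :=
  marg3 q (cyc x 0, cyc x 1, cyc x 2) *
    ∏ i ∈ Finset.range L,
      condProb q (cyc x i, cyc x (i+1), cyc x (i+2)) (cyc x (i+3))

open scoped Classical in
/-- Probability, under `P_q^{(L)}`, that the type of the sample lies in `F`. -/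
noncomputable def probTypeIn (q : X4 → ℝ) (L : ℕ) (F : Set (X4 → ℝ)) : ℝ :=
  ∑ x : Fin L → X, if empDist x ∈ F then markovLaw q x else 0

/-- Contig length `L_N = ⌈L̄ log₂ N⌉`. -/
noncomputable def LN (Lbar : ℝ) (N : ℕ) : ℕ := ⌈Lbar * Real.logb 2 N⌉₊

open scoped Classical in
/-- Probability of an event `E` for `N` i.i.d. pairs `(Kᵢ, Xᵢ)` where `Kᵢ` is uniform on
`{1,…,M}` and, given `Kᵢ = k`, `Xᵢ ∼ P_{p_k}^{(L)}`. -/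
noncomputable def probEvent (M : ℕ) (p : Fin M → X4 → ℝ) (N L : ℕ)
    (E : (Fin N → Fin M × (Fin L → X)) → Prop) : ℝ :=
  ∑ ω : Fin N → Fin M × (Fin L → X),
    (∏ i, (1 / (M : ℝ)) * markovLaw (p (ω i).1) (ω i).2) * (if E ω then 1 else 0)

/-- Probability of the error event
`ℰ_δ = {∃ i j, K_i ≠ K_j ∧ δ(X_i) = δ(X_j)}` for a decision rule `δ`. -/
noncomputable def errProb (M : ℕ) (p : Fin M → X4 → ℝ) (N L : ℕ)
    (δ : (Fin L → X) → Fin M) : ℝ :=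
  probEvent M p N L (fun ω => ∃ i j, (ω i).1 ≠ (ω j).1 ∧ δ (ω i).2 = δ (ω j).2)

/-- `C_min = min_{k≠ℓ} C(p_k, p_ℓ)`. -/
noncomputable def Cmin (M : ℕ) (p : Fin M → X4 → ℝ) : ℝ :=
  sInf {c : ℝ | ∃ k ℓ : Fin M, k ≠ ℓ ∧ c = Chernoff (p k) (p ℓ)}

/-- Resolvability: some sequence of decision rules has vanishing error probability. -/
def Resolvable (M : ℕ) (p : Fin M → X4 → ℝ) (Lbar : ℝ) : Prop :=
  ∃ δ : (N : ℕ) → (Fin (LN Lbar N) → X) → Fin M,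
    Filter.Tendsto (fun N => errProb M p N (LN Lbar N) (δ N)) Filter.atTop (nhds 0)

section DcAux

open Real

/-- Two-point log-sum inequality with strictness condition. -/
private lemma two_point (x1 x2 y1 y2 t : ℝ) (hx1 : 0 < x1) (hx2 : 0 < x2) (hy1 : 0 < y1)
    (hy2 : 0 < y2) (ht0 : 0 < t) (ht1 : t < 1) :
    ((t*x1+(1-t)*x2) * Real.log ((t*x1+(1-t)*x2)/(t*y1+(1-t)*y2))
      ≤ t*(x1*Real.log (x1/y1)) + (1-t)*(x2*Real.log (x2/y2))) ∧
    (x1/y1 ≠ x2/y2 →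
      (t*x1+(1-t)*x2) * Real.log ((t*x1+(1-t)*x2)/(t*y1+(1-t)*y2))
        < t*(x1*Real.log (x1/y1)) + (1-t)*(x2*Real.log (x2/y2))) := by
  have ht1' : 0 < 1 - t := by linarith
  set Y : ℝ := t*y1+(1-t)*y2 with hYdef
  have hY : 0 < Y := by positivity
  set s : ℝ := t*y1/Y with hsdef
  have hs0 : 0 < s := by positivity
  have hs1' : 1 - s = (1-t)*y2/Y := by
    rw [hsdef, hYdef]; field_simp; ring
  have hpos : 0 < (1-t)*y2/Y := by positivity
  have hs1 : s < 1 := by linarith [hs1' ▸ hpos]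
  set u1 : ℝ := x1/y1 with hu1def
  set u2 : ℝ := x2/y2 with hu2def
  have hXeq : t*x1+(1-t)*x2 = Y*(s*u1+(1-s)*u2) := by
    rw [hs1', hsdef, hu1def, hu2def, hYdef]
    field_simp
  have harg : (t*x1+(1-t)*x2)/Y = s*u1+(1-s)*u2 := by
    rw [hXeq, mul_comm, mul_div_assoc, div_self hY.ne', mul_one]
  have hLHS : (t*x1+(1-t)*x2) * Real.log ((t*x1+(1-t)*x2)/Y)
      = Y * ((s*u1+(1-s)*u2) * Real.log (s*u1+(1-s)*u2)) := by
    rw [harg, hXeq]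
    ring
  have hRHS : t*(x1*Real.log u1) + (1-t)*(x2*Real.log u2)
      = Y * (s*(u1*Real.log u1) + (1-s)*(u2*Real.log u2)) := by
    have hys : Y * s = t * y1 := by rw [hsdef]; field_simp
    have hys' : Y * (1-s) = (1-t) * y2 := by rw [hs1']; field_simp
    have hx1' : y1 * u1 = x1 := by rw [hu1def]; field_simp
    have hx2' : y2 * u2 = x2 := by rw [hu2def]; field_simp
    calc t*(x1*Real.log u1) + (1-t)*(x2*Real.log u2)
        = (t*y1)*(u1*Real.log u1) + ((1-t)*y2)*(u2*Real.log u2) := by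
          rw [← hx1', ← hx2']; ring
      _ = Y * (s*(u1*Real.log u1) + (1-s)*(u2*Real.log u2)) := by
          rw [← hys, ← hys']; ring
  have hu1m : u1 ∈ Set.Ici (0:ℝ) := le_of_lt (div_pos hx1 hy1)
  have hu2m : u2 ∈ Set.Ici (0:ℝ) := le_of_lt (div_pos hx2 hy2)
  constructor
  · have hcv := Real.convexOn_mul_log.2 hu1m hu2m hs0.le (by linarith : (0:ℝ) ≤ 1 - s)
      (by ring)
    simp only [smul_eq_mul] at hcv
    rw [hLHS, hRHS]
    exact mul_le_mul_of_nonneg_left hcv hY.le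
  · intro hne
    have hcv := Real.strictConvexOn_mul_log.2 hu1m hu2m hne hs0
      (by linarith : (0:ℝ) < 1 - s) (by ring)
    simp only [smul_eq_mul] at hcv
    rw [hLHS, hRHS]
    exact mul_lt_mul_of_pos_left hcv hY

private lemma marg3_pos {p : X4 → ℝ} (hp : MemP p) (a : X3) : 0 < marg3 p a :=
  Finset.sum_pos (fun b _ => hp.pos _) Finset.univ_nonempty

/-- If all conditional probabilities agree, the distributions agree. -/
private lemma cond_eq_imp {pa pb : X4 → ℝ} (ha : MemP pa) (hb : MemP pb)
    (h : ∀ a b, condProb pa a b = condProb pb a b) : pa = pb := by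
  have hma : ∀ a, 0 < marg3 pa a := marg3_pos ha
  have hmb : ∀ a, 0 < marg3 pb a := marg3_pos hb
  set c : X3 → ℝ := fun a => marg3 pa a / marg3 pb a with hcdef
  have fact1 : ∀ a b, pa (appX a b) = c a * pb (appX a b) := by
    intro a b
    have h1 := h a b
    unfold condProb at h1
    rw [div_eq_div_iff (hma a).ne' (hmb a).ne'] at h1
    show pa (appX a b) = (marg3 pa a / marg3 pb a) * pb (appX a b)
    rw [div_mul_eq_mul_div, eq_div_iff (hmb a).ne']
    linear_combination h1
  have hprep : ∀ (b : X) (a : X3), prepX b a = appX (b, a.1, a.2.1) a.2.2 := by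
    intro b a; rfl
  have fact2 : ∀ a : X3, marg3 pa a = ∑ b, c (b, a.1, a.2.1) * pb (prepX b a) := by
    intro a
    have : marg3 pa a = ∑ b, pa (prepX b a) := ha.consistent a
    rw [this]
    refine Finset.sum_congr rfl fun b _ => ?_
    rw [hprep b a, fact1]
  obtain ⟨a0, -, hmax⟩ := Finset.exists_max_image (Finset.univ : Finset X3) c
    Finset.univ_nonempty
  set M : ℝ := c a0 with hMdef
  have claim : ∀ a : X3, c a = M → ∀ b : X, c (b, a.1, a.2.1) = M := by
    intro a hca b0
    have hsum0 : ∑ b, (M - c (b, a.1, a.2.1)) * pb (prepX b a) = 0 := by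
      have e1 : ∑ b, (M - c (b, a.1, a.2.1)) * pb (prepX b a)
          = M * (∑ b, pb (prepX b a)) - ∑ b, c (b, a.1, a.2.1) * pb (prepX b a) := by
        rw [Finset.mul_sum, ← Finset.sum_sub_distrib]
        exact Finset.sum_congr rfl fun b _ => by ring
      have e3 : ∑ b, pb (prepX b a) = marg3 pb a := (hb.consistent a).symm
      have e2 : marg3 pa a = c a * marg3 pb a := by
        show marg3 pa a = (marg3 pa a / marg3 pb a) * marg3 pb a
        rw [div_mul_cancel₀ _ (hmb a).ne']
      rw [e1, ← fact2 a, e3, e2, hca]; ring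
    have hnn : ∀ b ∈ (Finset.univ : Finset X), 0 ≤ (M - c (b, a.1, a.2.1)) * pb (prepX b a) := by
      intro b _
      exact mul_nonneg (by linarith [hmax (b, a.1, a.2.1) (Finset.mem_univ _)])
        (hb.pos _).le
    have := (Finset.sum_eq_zero_iff_of_nonneg hnn).mp hsum0 b0 (Finset.mem_univ _)
    rcases mul_eq_zero.mp this with h' | h'
    · linarith
    · exact absurd h' (hb.pos _).ne'
  have s1 : ∀ b, c (b, a0.1, a0.2.1) = M := claim a0 rfl
  have s2 : ∀ b1 b2 : X, c (b2, b1, a0.1) = M := fun b1 b2 => claim (b1, a0.1, a0.2.1) (s1 b1) b2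
  have s3 : ∀ a : X3, c a = M := by
    rintro ⟨b3, b2, b1⟩
    exact claim (b2, b1, a0.1) (s2 b1 b2) b3
  have hall : ∀ x : X4, pa x = M * pb x := by
    intro x
    have := fact1 (x.1, x.2.1, x.2.2.1) x.2.2.2
    rw [s3] at this
    exact this
  have hM1 : M = 1 := by
    have hs : ∑ x : X4, pa x = M * ∑ x : X4, pb x := by
      rw [Finset.mul_sum]
      exact Finset.sum_congr rfl fun x _ => hall x
    rw [ha.sum_one, hb.sum_one, mul_one] at hs
    exact hs.symm
  funext x
  rw [hall x, hM1, one_mul]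

/-- Per-term convexity of the conditional relative entropy summand. -/
private lemma term_ineq {pa pb q : X4 → ℝ} (ha : MemP pa) (hb : MemP pb) (hq : MemP q)
    {t : ℝ} (ht0 : 0 < t) (ht1 : t < 1) (a : X3) (b : X) :
    ((t • pa + (1 - t) • pb) (appX a b) *
        Real.logb 2 (condProb (t • pa + (1 - t) • pb) a b / condProb q a b)
      ≤ t * (pa (appX a b) * Real.logb 2 (condProb pa a b / condProb q a b))
        + (1 - t) * (pb (appX a b) * Real.logb 2 (condProb pb a b / condProb q a b))) ∧
    (condProb pa a b ≠ condProb pb a b →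
      (t • pa + (1 - t) • pb) (appX a b) *
          Real.logb 2 (condProb (t • pa + (1 - t) • pb) a b / condProb q a b)
        < t * (pa (appX a b) * Real.logb 2 (condProb pa a b / condProb q a b))
          + (1 - t) * (pb (appX a b) * Real.logb 2 (condProb pb a b / condProb q a b))) := by
  have hpl : ∀ x : X4, (t • pa + (1 - t) • pb) x = t * pa x + (1 - t) * pb x := by
    intro x; simp [smul_eq_mul]
  have hml : marg3 (t • pa + (1 - t) • pb) a = t * marg3 pa a + (1 - t) * marg3 pb a := by
    simp only [marg3, hpl, Finset.sum_add_distrib, Finset.mul_sum]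
  set x1 := pa (appX a b) with hx1def
  set x2 := pb (appX a b) with hx2def
  set y1 := marg3 pa a with hy1def
  set y2 := marg3 pb a with hy2def
  have hx1 : 0 < x1 := ha.pos _
  have hx2 : 0 < x2 := hb.pos _
  have hy1 : 0 < y1 := marg3_pos ha a
  have hy2 : 0 < y2 := marg3_pos hb a
  have hqc : 0 < condProb q a b := div_pos (hq.pos _) (marg3_pos hq a)
  set qc := condProb q a b with hqcdef
  have hlog2 : (0:ℝ) < Real.log 2 := Real.log_pos one_lt_two
  have hterm : ∀ (x y : ℝ), 0 < x → 0 < y →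
      x * Real.logb 2 ((x / y) / qc) =
        (x * Real.log (x / y) - x * Real.log qc) * (Real.log 2)⁻¹ := by
    intro x y hx hy
    rw [Real.logb, Real.log_div (by positivity) hqc.ne']
    ring
  have el : (t • pa + (1 - t) • pb) (appX a b) *
      Real.logb 2 (condProb (t • pa + (1 - t) • pb) a b / qc)
      = ((t*x1+(1-t)*x2) * Real.log ((t*x1+(1-t)*x2)/(t*y1+(1-t)*y2))
          - (t*x1+(1-t)*x2) * Real.log qc) * (Real.log 2)⁻¹ := by
    rw [hpl (appX a b)]
    unfold condProb
    rw [hpl (appX a b), hml]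
    have h1 : 0 < t * pa (appX a b) + (1 - t) * pb (appX a b) := by
      have := mul_pos ht0 (ha.pos (appX a b))
      have := mul_pos (by linarith : (0:ℝ) < 1 - t) (hb.pos (appX a b))
      linarith
    have h2 : 0 < t * y1 + (1 - t) * y2 := by
      have := mul_pos ht0 hy1
      have := mul_pos (by linarith : (0:ℝ) < 1 - t) hy2
      linarith
    exact hterm _ _ h1 h2
  have ea : pa (appX a b) * Real.logb 2 (condProb pa a b / qc)
      = (x1 * Real.log (x1/y1) - x1 * Real.log qc) * (Real.log 2)⁻¹ := by
    unfold condProb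
    exact hterm _ _ hx1 hy1
  have eb : pb (appX a b) * Real.logb 2 (condProb pb a b / qc)
      = (x2 * Real.log (x2/y2) - x2 * Real.log qc) * (Real.log 2)⁻¹ := by
    unfold condProb
    exact hterm _ _ hx2 hy2
  have key := two_point x1 x2 y1 y2 t hx1 hx2 hy1 hy2 ht0 ht1
  have hcne : condProb pa a b = x1 / y1 := rfl
  have hcne' : condProb pb a b = x2 / y2 := rfl
  constructor
  · rw [el, ea, eb]
    calc ((t*x1+(1-t)*x2) * Real.log ((t*x1+(1-t)*x2)/(t*y1+(1-t)*y2))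
            - (t*x1+(1-t)*x2) * Real.log qc) * (Real.log 2)⁻¹
        ≤ (t*(x1*Real.log (x1/y1)) + (1-t)*(x2*Real.log (x2/y2))
            - (t*x1+(1-t)*x2) * Real.log qc) * (Real.log 2)⁻¹ := by
          apply mul_le_mul_of_nonneg_right _ (inv_nonneg.mpr hlog2.le)
          linarith [key.1]
      _ = t * ((x1 * Real.log (x1/y1) - x1 * Real.log qc) * (Real.log 2)⁻¹)
            + (1-t) * ((x2 * Real.log (x2/y2) - x2 * Real.log qc) * (Real.log 2)⁻¹) := by
          ring
  · intro hne
    rw [hcne, hcne'] at hne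
    rw [el, ea, eb]
    calc ((t*x1+(1-t)*x2) * Real.log ((t*x1+(1-t)*x2)/(t*y1+(1-t)*y2))
            - (t*x1+(1-t)*x2) * Real.log qc) * (Real.log 2)⁻¹
        < (t*(x1*Real.log (x1/y1)) + (1-t)*(x2*Real.log (x2/y2))
            - (t*x1+(1-t)*x2) * Real.log qc) * (Real.log 2)⁻¹ := by
          apply mul_lt_mul_of_pos_right _ (inv_pos.mpr hlog2)
          linarith [key.2 hne]
      _ = t * ((x1 * Real.log (x1/y1) - x1 * Real.log qc) * (Real.log 2)⁻¹)
            + (1-t) * ((x2 * Real.log (x2/y2) - x2 * Real.log qc) * (Real.log 2)⁻¹) := by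
          ring

end DcAux

/-- the conditional relative entropy is strictly convex in its first
argument: for `p_a ≠ p_b` in `𝒫̃` and `λ ∈ (0,1)`,
`D_c(λp_a + (1−λ)p_b ‖ q) < λD_c(p_a‖q) + (1−λ)D_c(p_b‖q)`. -/
theorem Dc_strictly_convex (pa pb q : X4 → ℝ) (ha : MemP pa) (hb : MemP pb)
    (hq : MemP q) (hne : pa ≠ pb) (t : ℝ) (ht : t ∈ Set.Ioo (0:ℝ) 1) :
    Dc (t • pa + (1 - t) • pb) q < t * Dc pa q + (1 - t) * Dc pb q := by
  obtain ⟨ht0, ht1⟩ := ht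
  have hwit : ∃ a b, condProb pa a b ≠ condProb pb a b := by
    by_contra h
    push_neg at h
    exact hne (cond_eq_imp ha hb h)
  obtain ⟨a0, b0, hwit⟩ := hwit
  unfold Dc
  have hR : t * (∑ a : X3, ∑ b : X,
        pa (appX a b) * Real.logb 2 (condProb pa a b / condProb q a b))
      + (1 - t) * (∑ a : X3, ∑ b : X,
        pb (appX a b) * Real.logb 2 (condProb pb a b / condProb q a b))
      = ∑ a : X3, ∑ b : X,
        (t * (pa (appX a b) * Real.logb 2 (condProb pa a b / condProb q a b))
          + (1 - t) * (pb (appX a b) * Real.logb 2 (condProb pb a b / condProb q a b))) := by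
    rw [Finset.mul_sum, Finset.mul_sum, ← Finset.sum_add_distrib]
    refine Finset.sum_congr rfl fun a _ => ?_
    rw [Finset.mul_sum, Finset.mul_sum, ← Finset.sum_add_distrib]
  rw [hR]
  apply Finset.sum_lt_sum
  · intro a _
    exact Finset.sum_le_sum fun b _ => (term_ineq ha hb hq ht0 ht1 a b).1
  · refine ⟨a0, Finset.mem_univ _, ?_⟩
    apply Finset.sum_lt_sum
    · intro b _
      exact (term_ineq ha hb hq ht0 ht1 a0 b).1
    · exact ⟨b0, Finset.mem_univ _, (term_ineq ha hb hq ht0 ht1 a0 b0).2 hwit⟩
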